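/- Let α = (a₁,…,a_r) and β = (b₁,…,b_s) be two non-decreasing sequences of prime numbers. If ∏ᵢ (1 − 1/aᵢ) = ∏ⱼ (1 − 1/bⱼ), then r = s and aᵢ = bᵢ for all i. -/

import Mathlib

namespace Stmt10Aux
open List

noncomputable def f (p : ℕ) : ℚ := 1 - 1 / (p : ℚ)

lemma prod_ne_zero (a : List ℕ) (ha : ∀ p ∈ a, p.Prime) : a.prod ≠ 0 := by
  induction a with
  | nil => simp
  | cons q l ih =>
    simp only [prod_cons]
    exact mul_ne_zero (ha q (mem_cons_self)).pos.ne'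
      (ih fun p hp => ha p (mem_cons_of_mem _ hp))

lemma sub_prod_ne_zero (a : List ℕ) (ha : ∀ p ∈ a, p.Prime) :
    (a.map (· - 1)).prod ≠ 0 := by
  induction a with
  | nil => simp
  | cons q l ih =>
    have hq := (ha q (mem_cons_self)).two_le
    simp only [map_cons, prod_cons]
    exact mul_ne_zero (by omega) (ih fun p hp => ha p (mem_cons_of_mem _ hp))

lemma prod_eq_div (a : List ℕ) (ha : ∀ p ∈ a, p.Prime) :
    (a.map f).prod = ((a.map (· - 1)).prod : ℕ) / (a.prod : ℕ) := by
  induction a with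
  | nil => simp
  | cons q l ih =>
    have hq := (ha q (mem_cons_self)).two_le
    have hl := ih fun p hp => ha p (mem_cons_of_mem _ hp)
    have hq0 : (q : ℚ) ≠ 0 := Nat.cast_ne_zero.mpr (by omega)
    have hl0 : ((l.prod : ℕ) : ℚ) ≠ 0 :=
      Nat.cast_ne_zero.mpr (prod_ne_zero l fun p hp => ha p (mem_cons_of_mem _ hp))
    simp only [map_cons, prod_cons, hl, Nat.cast_mul, f]
    rw [Nat.cast_sub (by omega : 1 ≤ q)]
    field_simp
    push_cast; ring

lemma fact_count (a : List ℕ) (ha : ∀ p ∈ a, p.Prime) (q : ℕ) :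
    (a.prod).factorization q = a.count q := by
  induction a with
  | nil => simp
  | cons p l ih =>
    have hp := ha p (mem_cons_self)
    have hl : ∀ r ∈ l, r.Prime := fun r hr => ha r (mem_cons_of_mem _ hr)
    rw [prod_cons, Nat.factorization_mul hp.pos.ne' (prod_ne_zero l hl)]
    simp only [Finsupp.add_apply, ih hl, hp.factorization, Finsupp.single_apply,
      count_cons, beq_iff_eq]
    omega

lemma not_dvd_sub_prod (a : List ℕ) (ha : ∀ p ∈ a, p.Prime) (q : ℕ) (hq : q.Prime)
    (hle : ∀ p ∈ a, p ≤ q) : ¬ q ∣ (a.map (· - 1)).prod := by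
  intro hdvd
  obtain ⟨x, hx, hqx⟩ := hq.prime.dvd_prod_iff.mp hdvd
  obtain ⟨p, hp, rfl⟩ := mem_map.mp hx
  have h2 := (ha p hp).two_le
  have hle' := hle p hp
  have := Nat.le_of_dvd (by omega) hqx
  omega

lemma count_eq (a b : List ℕ)
    (ha : ∀ p ∈ a, p.Prime) (hb : ∀ p ∈ b, p.Prime)
    (h : (a.map f).prod = (b.map f).prod)
    (q : ℕ) (hq : q.Prime)
    (hqa : ∀ p ∈ a, p ≤ q) (hqb : ∀ p ∈ b, p ≤ q) :
    a.count q = b.count q := by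
  rw [prod_eq_div a ha, prod_eq_div b hb] at h
  have hDa : ((a.prod : ℕ) : ℚ) ≠ 0 := Nat.cast_ne_zero.mpr (prod_ne_zero a ha)
  have hDb : ((b.prod : ℕ) : ℚ) ≠ 0 := Nat.cast_ne_zero.mpr (prod_ne_zero b hb)
  rw [div_eq_div_iff hDa hDb] at h
  have hnat : (a.map (· - 1)).prod * b.prod = (b.map (· - 1)).prod * a.prod := by
    exact_mod_cast h
  have hfa := congrArg (fun n => n.factorization q) hnat
  simp only [Nat.factorization_mul (sub_prod_ne_zero a ha) (prod_ne_zero b hb),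
      Nat.factorization_mul (sub_prod_ne_zero b hb) (prod_ne_zero a ha),
      Finsupp.add_apply,
      Nat.factorization_eq_zero_of_not_dvd (not_dvd_sub_prod a ha q hq hqa),
      Nat.factorization_eq_zero_of_not_dvd (not_dvd_sub_prod b hb q hq hqb),
      fact_count a ha, fact_count b hb, zero_add] at hfa
  omega

lemma prod_pos_le_one (a : List ℕ) (ha : ∀ p ∈ a, p.Prime) :
    0 < (a.map f).prod ∧ (a.map f).prod ≤ 1 := by
  induction a with
  | nil => simp
  | cons q l ih =>
    have hq := (ha q (mem_cons_self)).two_le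
    obtain ⟨h1, h2⟩ := ih fun p hp => ha p (mem_cons_of_mem _ hp)
    have hq2 : (2 : ℚ) ≤ (q : ℚ) := by exact_mod_cast hq
    have hf1 : 0 < f q := by
      rw [f, sub_pos, div_lt_one (by linarith)]; linarith
    have hf2 : f q < 1 := by
      have : 0 < 1 / (q : ℚ) := by positivity
      rw [f]; linarith
    simp only [map_cons, prod_cons]
    constructor
    · positivity
    · nlinarith

lemma prod_lt_one (q : ℕ) (l : List ℕ) (ha : ∀ p ∈ q :: l, p.Prime) :
    (((q :: l)).map f).prod < 1 := by
  have hq := (ha q (mem_cons_self)).two_le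
  obtain ⟨h1, h2⟩ := prod_pos_le_one l fun p hp => ha p (mem_cons_of_mem _ hp)
  have hq2 : (2 : ℚ) ≤ (q : ℚ) := by exact_mod_cast hq
  have hf2 : f q < 1 := by
    have : 0 < 1 / (q : ℚ) := by positivity
    rw [f]; linarith
  have hf1 : 0 < f q := by
    rw [f, sub_pos, div_lt_one (by linarith)]; linarith
  simp only [map_cons, prod_cons]
  nlinarith

lemma f_ne_zero (q : ℕ) (hq : q.Prime) : f q ≠ 0 := by
  have hq2 : (2 : ℚ) ≤ (q : ℚ) := by exact_mod_cast hq.two_le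
  have : 0 < f q := by rw [f, sub_pos, div_lt_one (by linarith)]; linarith
  exact this.ne'

lemma main : ∀ (a b : List ℕ), (∀ p ∈ a, p.Prime) → (∀ p ∈ b, p.Prime) →
    a.Pairwise (· ≥ ·) → b.Pairwise (· ≥ ·) →
    (a.map f).prod = (b.map f).prod → a = b := by
  intro a
  induction a with
  | nil =>
    intro b _ hb _ _ h
    cases b with
    | nil => rfl
    | cons r b' =>
      exfalso
      have := prod_lt_one r b' hb
      simp only [map_nil, prod_nil] at h
      rw [← h] at this
      exact lt_irrefl 1 this
  | cons q a' ih =>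
    intro b ha hb hasort hbsort h
    cases b with
    | nil =>
      exfalso
      have := prod_lt_one q a' ha
      simp only [map_nil, prod_nil] at h
      rw [h] at this
      exact lt_irrefl 1 this
    | cons r b' =>
      have hq := ha q (mem_cons_self)
      have hr := hb r (mem_cons_self)
      have hqa : ∀ p ∈ q :: a', p ≤ q := by
        intro p hp
        rcases mem_cons.mp hp with rfl | hp
        · exact le_refl p
        · exact (pairwise_cons.mp hasort).1 p hp
      have hqb : ∀ p ∈ r :: b', p ≤ r := by
        intro p hp
        rcases mem_cons.mp hp with rfl | hp
        · exact le_refl p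
        · exact (pairwise_cons.mp hbsort).1 p hp
      -- show q = r
      have hqr : q = r := by
        rcases le_total q r with hle | hle
        · -- r is the max of everything
          have hc := count_eq (q :: a') (r :: b') ha hb h r hr
            (fun p hp => le_trans (hqa p hp) hle) hqb
          have : r ∈ q :: a' := by
            rw [← count_pos_iff, hc]
            simp [count_cons_self]
          have := hqa r this
          omega
        · have hc := count_eq (q :: a') (r :: b') ha hb h q hq
            hqa (fun p hp => le_trans (hqb p hp) hle)
          have : q ∈ r :: b' := by
            rw [← count_pos_iff, ← hc]
            simp [count_cons_self]
          have := hqb q this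
          omega
      subst hqr
      have hfq := f_ne_zero q hq
      simp only [map_cons, prod_cons] at h
      have h' : (a'.map f).prod = (b'.map f).prod := by
        exact mul_left_cancel₀ hfq h
      have := ih b' (fun p hp => ha p (mem_cons_of_mem _ hp))
        (fun p hp => hb p (mem_cons_of_mem _ hp))
        (pairwise_cons.mp hasort).2 (pairwise_cons.mp hbsort).2 h'
      rw [this]

lemma conv (a : List ℕ) :
    (a.map (fun p => 1 - 1 / (p : ℚ))).prod = (a.map f).prod := by
  induction a with
  | nil => rfl
  | cons q l ih => simp_all [f]

end Stmt10Aux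

theorem stmt_10 (a b : List ℕ)
    (ha : ∀ p ∈ a, p.Prime) (hb : ∀ p ∈ b, p.Prime)
    (hasort : a.Pairwise (· ≤ ·)) (hbsort : b.Pairwise (· ≤ ·))
    (h : (a.map (fun p => 1 - 1 / (p : ℚ))).prod =
         (b.map (fun p => 1 - 1 / (p : ℚ))).prod) :
    a = b := by
  rw [Stmt10Aux.conv, Stmt10Aux.conv] at h
  have h' : (a.reverse.map Stmt10Aux.f).prod = (b.reverse.map Stmt10Aux.f).prod := by
    rw [List.map_reverse, List.map_reverse, List.prod_reverse, List.prod_reverse]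
    exact h
  have hra : a.reverse.Pairwise (· ≥ ·) := by
    rw [List.pairwise_reverse]; exact hasort
  have hrb : b.reverse.Pairwise (· ≥ ·) := by
    rw [List.pairwise_reverse]; exact hbsort
  have := Stmt10Aux.main a.reverse b.reverse
    (fun p hp => ha p (List.mem_reverse.mp hp))
    (fun p hp => hb p (List.mem_reverse.mp hp)) hra hrb h'
  have := congrArg List.reverse this
  simpa using this
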